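/- Let X be a separable Banach space and (xₙ)ₙ a sequence dense in the closed unit ball B_X. Suppose (aₙ)ₙ is a sequence of real numbers in [−1,1] such that for every finite set M ⊆ ℕ, |Σ_{n∈M} aₙ| ≤ ‖Σ_{n∈M} xₙ‖. Then there exists a continuous linear functional x* on X with ‖x*‖ ≤ 1 and x*(xₙ) = aₙ for every n. -/

import Mathlib

open Finset Metric Set

section Aux
variable {X : Type*} [NormedAddCommGroup X] [NormedSpace ℝ X]

lemma aux_approx [Nontrivial X] (x : ℕ → X)
    (hdense : Metric.closedBall (0 : X) 1 ⊆ closure (Set.range x))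
    (y : X) (hy : ‖y‖ ≤ 1) {ε : ℝ} (hε : 0 < ε) (F : Finset ℕ) :
    ∃ n, n ∉ F ∧ ‖x n - y‖ < ε := by
  classical
  obtain ⟨u, hu1, huy⟩ : ∃ u : X, ‖u‖ ≤ 1 ∧ u ≠ y := by
    by_cases h0 : y = 0
    · obtain ⟨v, hv⟩ := exists_ne (0 : X)
      refine ⟨‖v‖⁻¹ • v, ?_, ?_⟩
      · rw [norm_smul, norm_inv, norm_norm, inv_mul_cancel₀ (norm_ne_zero_iff.mpr hv)]
      · subst h0
        simp [smul_eq_zero, hv, norm_eq_zero, inv_eq_zero]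
    · exact ⟨0, by simp, fun h => h0 h.symm⟩
  set L := ‖u - y‖ with hL
  have hLpos : 0 < L := by
    rw [hL, norm_pos_iff, sub_ne_zero]; exact huy
  set z : ℝ → X := fun t => y + t • (u - y) with hz
  have hzinj : Function.Injective z := by
    intro s t h
    have h2 : (s - t) • (u - y) = 0 := by
      rw [sub_smul]
      have := add_left_cancel h
      rw [this]; abel
    rcases smul_eq_zero.mp h2 with h3 | h3
    · linarith [sub_eq_zero.mp h3]
    · exact absurd (sub_eq_zero.mp h3) huy
  have hImin : 0 < min 1 (ε / (2 * L)) := lt_min one_pos (by positivity)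
  have hIinf : (Set.Ioo (0:ℝ) (min 1 (ε / (2 * L)))).Infinite := Set.Ioo_infinite hImin
  have hbadfin : (z ⁻¹' (x '' ↑F)).Finite :=
    Set.Finite.preimage hzinj.injOn ((F.finite_toSet).image x)
  obtain ⟨t, htI, htbad⟩ := (hIinf.diff hbadfin).nonempty
  obtain ⟨ht0, htm⟩ := htI
  have ht1 : t < 1 := lt_of_lt_of_le htm (min_le_left _ _)
  have htL : t * L < ε / 2 := by
    have h := lt_of_lt_of_le htm (min_le_right _ _)
    have h2 : t * (2 * L) < ε := (lt_div_iff₀ (by positivity)).mp h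
    nlinarith
  have hzy : ‖z t - y‖ = t * L := by
    simp only [hz, add_sub_cancel_left, norm_smul, Real.norm_eq_abs, abs_of_pos ht0, hL]
  have hz1 : ‖z t‖ ≤ 1 := by
    have he : z t = (1 - t) • y + t • u := by
      simp only [hz]; module
    rw [he]
    calc ‖(1 - t) • y + t • u‖ ≤ ‖(1 - t) • y‖ + ‖t • u‖ := norm_add_le _ _
      _ = (1 - t) * ‖y‖ + t * ‖u‖ := by
          rw [norm_smul, norm_smul, Real.norm_eq_abs, Real.norm_eq_abs,
            abs_of_pos (by linarith : (0:ℝ) < 1 - t), abs_of_pos ht0]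
      _ ≤ 1 := by nlinarith
  have hne : ∀ m ∈ F, z t ≠ x m := by
    intro m hm h
    exact htbad ⟨m, hm, h.symm⟩
  obtain ⟨δ₂, hδ₂pos, hδ₂⟩ : ∃ δ₂ > 0, ∀ m ∈ F, δ₂ ≤ ‖x m - z t‖ := by
    rcases F.eq_empty_or_nonempty with hF | hF
    · exact ⟨1, one_pos, by simp [hF]⟩
    · refine ⟨F.inf' hF fun m => ‖x m - z t‖, ?_, fun m hm => Finset.inf'_le _ hm⟩
      rw [gt_iff_lt, Finset.lt_inf'_iff]
      intro m hm
      rw [norm_pos_iff, sub_ne_zero]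
      exact fun h => hne m hm h.symm
  have hzcl : z t ∈ closure (Set.range x) := by
    apply hdense
    simpa [Metric.mem_closedBall, dist_zero_right] using hz1
  obtain ⟨w, ⟨n, rfl⟩, hd⟩ := Metric.mem_closure_iff.mp hzcl (min (ε/2) δ₂)
    (lt_min (by linarith) hδ₂pos)
  refine ⟨n, ?_, ?_⟩
  · intro hn
    have h1 : δ₂ ≤ ‖x n - z t‖ := hδ₂ n hn
    have h2 : dist (z t) (x n) < δ₂ := lt_of_lt_of_le hd (min_le_right _ _)
    rw [dist_eq_norm, norm_sub_rev] at h2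
    linarith
  · have h2 : ‖x n - z t‖ < ε/2 := by
      have := lt_of_lt_of_le hd (min_le_left _ _)
      rwa [dist_eq_norm, norm_sub_rev] at this
    calc ‖x n - y‖ ≤ ‖x n - z t‖ + ‖z t - y‖ := by
          have : x n - y = (x n - z t) + (z t - y) := by abel
          rw [this]; exact norm_add_le _ _
      _ < ε/2 + ε/2 := by rw [hzy]; exact add_lt_add h2 htL
      _ = ε := by ring

end Aux
section Aux2
variable {X : Type*} [NormedAddCommGroup X] [NormedSpace ℝ X]
variable (x : ℕ → X) (a : ℕ → ℝ)

lemma aux_single (hle : ∀ M : Finset ℕ, |∑ n ∈ M, a n| ≤ ‖∑ n ∈ M, x n‖) (n : ℕ) : |a n| ≤ ‖x n‖ := by simpa using hle {n}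

lemma aux_pair (hle : ∀ M : Finset ℕ, |∑ n ∈ M, a n| ≤ ‖∑ n ∈ M, x n‖) {m n : ℕ} (h : m ≠ n) : |a m + a n| ≤ ‖x m + x n‖ := by
  have := hle {m, n}
  rwa [Finset.sum_pair h, Finset.sum_pair h] at this

lemma aux_diff [Nontrivial X]
    (hle : ∀ M : Finset ℕ, |∑ n ∈ M, a n| ≤ ‖∑ n ∈ M, x n‖)
    (hx : ∀ n, ‖x n‖ ≤ 1)
    (hdense : Metric.closedBall (0 : X) 1 ⊆ closure (Set.range x))
    (m n : ℕ) : |a m - a n| ≤ ‖x m - x n‖ := by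
  refine le_of_forall_pos_le_add fun δ hδ => ?_
  obtain ⟨k, hk, hkd⟩ := aux_approx x hdense (-x n) (by simpa using hx n) (half_pos hδ) {m, n}
  have hkm : k ≠ m := fun h => hk (by simp [h])
  have hkn : k ≠ n := fun h => hk (by simp [h])
  have hxk : ‖x k + x n‖ < δ / 2 := by
    rwa [sub_neg_eq_add] at hkd
  have h1 : |a m + a k| ≤ ‖x m + x k‖ := aux_pair x a hle (Ne.symm hkm)
  have h2 : |a n + a k| ≤ ‖x n + x k‖ := aux_pair x a hle (Ne.symm hkn)
  have h2' : |a n + a k| < δ / 2 := lt_of_le_of_lt h2 (by rwa [add_comm] at hxk)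
  have h3 : ‖x m + x k‖ ≤ ‖x m - x n‖ + ‖x k + x n‖ := by
    calc ‖x m + x k‖ = ‖(x m - x n) + (x k + x n)‖ := by congr 1; abel
      _ ≤ _ := norm_add_le _ _
  calc |a m - a n| = |(a m + a k) - (a n + a k)| := by ring_nf
    _ ≤ |a m + a k| + |a n + a k| := abs_sub _ _
    _ ≤ (‖x m - x n‖ + ‖x k + x n‖) + |a n + a k| := by linarith
    _ ≤ ‖x m - x n‖ + δ := by linarith
end Aux2
section Aux3
variable {X : Type*} [NormedAddCommGroup X] [NormedSpace ℝ X]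

lemma aux_sum_split {M : Type*} [AddCommMonoid M] {s : Finset ℕ} {m n : ℕ}
    (hm : m ∉ s) (hn : n ∈ s) (f g h : ℕ → M) :
    ∑ j ∈ insert m s, (if j = m then g j else if j = n then h j else f j)
      = g m + (h n + ∑ j ∈ s.erase n, f j) := by
  classical
  rw [Finset.sum_insert hm, if_pos rfl]
  congr 1
  rw [← Finset.add_sum_erase _ _ hn, if_neg (fun hh : n = m => hm (hh ▸ hn)), if_pos rfl]
  congr 1
  refine Finset.sum_congr rfl fun j hj => ?_
  rw [if_neg (fun hh : j = m => hm (hh ▸ (Finset.mem_of_mem_erase hj))),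
    if_neg (Finset.ne_of_mem_erase hj)]

lemma aux_flat (x : ℕ → X) (a : ℕ → ℝ)
    (hle : ∀ M : Finset ℕ, |∑ n ∈ M, a n| ≤ ‖∑ n ∈ M, x n‖)
    (s : Finset ℕ) (c : ℕ → ℤ) (hc : ∀ n ∈ s, c n = 0 ∨ c n = 1) :
    |∑ n ∈ s, (c n : ℝ) * a n| ≤ ‖∑ n ∈ s, (c n : ℝ) • x n‖ := by
  classical
  have h1 : ∑ n ∈ s, (c n : ℝ) * a n = ∑ n ∈ s.filter (fun n => c n = 1), a n := by
    rw [Finset.sum_filter]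
    refine Finset.sum_congr rfl fun n hn => ?_
    rcases hc n hn with h | h <;> simp [h]
  have h2 : ∑ n ∈ s, (c n : ℝ) • x n = ∑ n ∈ s.filter (fun n => c n = 1), x n := by
    rw [Finset.sum_filter]
    refine Finset.sum_congr rfl fun n hn => ?_
    rcases hc n hn with h | h <;> simp [h]
  rw [h1, h2]
  exact hle _
end Aux3
section Aux4
variable {X : Type*} [NormedAddCommGroup X] [NormedSpace ℝ X]

lemma aux_main [Nontrivial X] (x : ℕ → X) (a : ℕ → ℝ)
    (hle : ∀ M : Finset ℕ, |∑ n ∈ M, a n| ≤ ‖∑ n ∈ M, x n‖)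
    (hx : ∀ n, ‖x n‖ ≤ 1)
    (hdense : Metric.closedBall (0 : X) 1 ⊆ closure (Set.range x)) :
    ∀ (k : ℕ) (s : Finset ℕ) (c : ℕ → ℤ),
      (∑ n ∈ s, (if 0 ≤ c n then c n - 1 else 1 - c n).toNat) ≤ k →
      ∀ δ : ℝ, 0 < δ →
      |∑ n ∈ s, (c n : ℝ) * a n| ≤ ‖∑ n ∈ s, (c n : ℝ) • x n‖ + 2*k*δ := by
  classical
  intro k
  induction k with
  | zero =>
    intro s c hμ δ hδ
    have hc : ∀ n ∈ s, c n = 0 ∨ c n = 1 := by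
      intro n hn
      have h0 := Finset.sum_eq_zero_iff.mp (Nat.le_zero.mp hμ) n hn
      rcases le_or_gt 0 (c n) with h | h
      · rw [if_pos h] at h0; omega
      · rw [if_neg (not_le.mpr h)] at h0; omega
    simpa using aux_flat x a hle s c hc
  | succ k IH =>
    intro s c hμ δ hδ
    by_cases hflat : ∀ n ∈ s, c n = 0 ∨ c n = 1
    · have h1 := aux_flat x a hle s c hflat
      have h0 : (0:ℝ) ≤ 2*((k:ℝ)+1)*δ := by positivity
      push_cast
      linarith
    · push_neg at hflat
      obtain ⟨n, hns, hc0, hc1⟩ := hflat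
      rcases (by omega : 2 ≤ c n ∨ c n ≤ -1) with hpos | hneg
      -- positive case
      · obtain ⟨m, hms, hmd⟩ := aux_approx x hdense (x n) (hx n) hδ s
        have hmn : m ≠ n := fun h => hms (h ▸ hns)
        set c' : ℕ → ℤ := fun j => if j = m then 1 else if j = n then c n - 1 else c j with hc'
        have hsa : ∑ j ∈ insert m s, (c' j : ℝ) * a j
            = (1:ℝ) * a m + (((c n - 1 : ℤ) : ℝ) * a n + ∑ j ∈ s.erase n, (c j : ℝ) * a j) := by
          rw [← aux_sum_split hms hns (fun j => (c j : ℝ) * a j) (fun j => (1:ℝ) * a j)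
            (fun j => ((c n - 1 : ℤ) : ℝ) * a j)]
          refine Finset.sum_congr rfl fun j hj => ?_
          simp only [hc']
          split_ifs <;> push_cast <;> ring
        have hSa : ∑ j ∈ insert m s, (c' j : ℝ) * a j
            = (∑ j ∈ s, (c j : ℝ) * a j) + (a m - a n) := by
          rw [hsa, ← Finset.add_sum_erase s (fun j => (c j : ℝ) * a j) hns]
          push_cast; ring
        have hsx : ∑ j ∈ insert m s, (c' j : ℝ) • x j
            = ((1:ℝ)) • x m + ((((c n - 1 : ℤ) : ℝ)) • x n + ∑ j ∈ s.erase n, (c j : ℝ) • x j) := by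
          rw [← aux_sum_split hms hns (fun j => (c j : ℝ) • x j) (fun j => ((1:ℝ)) • x j)
            (fun j => (((c n - 1 : ℤ) : ℝ)) • x j)]
          refine Finset.sum_congr rfl fun j hj => ?_
          simp only [hc']
          split_ifs <;> push_cast <;> module
        have hTx : ∑ j ∈ insert m s, (c' j : ℝ) • x j
            = (∑ j ∈ s, (c j : ℝ) • x j) + (x m - x n) := by
          rw [hsx, ← Finset.add_sum_erase s (fun j => (c j : ℝ) • x j) hns]
          push_cast
          module
        have hμ2 : ∑ j ∈ insert m s, (if 0 ≤ c' j then c' j - 1 else 1 - c' j).toNat ≤ k := by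
          have e : ∑ j ∈ insert m s, (if 0 ≤ c' j then c' j - 1 else 1 - c' j).toNat
              = (if 0 ≤ (1:ℤ) then (1:ℤ) - 1 else 1 - 1).toNat
                + ((if 0 ≤ c n - 1 then c n - 1 - 1 else 1 - (c n - 1)).toNat
                  + ∑ j ∈ s.erase n, (if 0 ≤ c j then c j - 1 else 1 - c j).toNat) := by
            rw [← aux_sum_split hms hns (fun j => (if 0 ≤ c j then c j - 1 else 1 - c j).toNat)
              (fun _ => (if 0 ≤ (1:ℤ) then (1:ℤ) - 1 else 1 - 1).toNat)
              (fun _ => (if 0 ≤ c n - 1 then c n - 1 - 1 else 1 - (c n - 1)).toNat)]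
            refine Finset.sum_congr rfl fun j hj => ?_
            simp only [hc']
            by_cases h1 : j = m
            · simp [h1]
            · by_cases h2 : j = n <;> simp [h1, h2, Ne.symm hmn]
          rw [e]
          rw [← Finset.add_sum_erase s (fun j => (if 0 ≤ c j then c j - 1 else 1 - c j).toNat) hns] at hμ
          have h2 : (if 0 ≤ c n - 1 then c n - 1 - 1 else 1 - (c n - 1)).toNat + 1
              ≤ (if 0 ≤ c n then c n - 1 else 1 - c n).toNat := by
            split_ifs <;> omega
          have h3 : (if 0 ≤ (1:ℤ) then (1:ℤ) - 1 else 1 - 1).toNat = 0 := by norm_num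
          omega
        have hIH := IH (insert m s) c' hμ2 δ hδ
        have hdm : |a m - a n| ≤ ‖x m - x n‖ := aux_diff x a hle hx hdense m n
        have h4 : |∑ j ∈ s, (c j : ℝ) * a j|
            ≤ |∑ j ∈ insert m s, (c' j : ℝ) * a j| + |a m - a n| := by
          have e : ∑ j ∈ s, (c j : ℝ) * a j
              = (∑ j ∈ insert m s, (c' j : ℝ) * a j) - (a m - a n) := by rw [hSa]; ring
          rw [e]; exact abs_sub _ _
        have h5 : ‖∑ j ∈ insert m s, (c' j : ℝ) • x j‖
            ≤ ‖∑ j ∈ s, (c j : ℝ) • x j‖ + ‖x m - x n‖ := by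
          rw [hTx]; exact norm_add_le _ _
        push_cast
        linarith
      -- negative case
      · obtain ⟨m, hms, hmd⟩ := aux_approx x hdense (-x n) (by simpa using hx n) hδ s
        rw [sub_neg_eq_add] at hmd
        have hmn : m ≠ n := fun h => hms (h ▸ hns)
        set c' : ℕ → ℤ := fun j => if j = m then 1 else if j = n then c n + 1 else c j with hc'
        have hsa : ∑ j ∈ insert m s, (c' j : ℝ) * a j
            = (1:ℝ) * a m + (((c n + 1 : ℤ) : ℝ) * a n + ∑ j ∈ s.erase n, (c j : ℝ) * a j) := by
          rw [← aux_sum_split hms hns (fun j => (c j : ℝ) * a j) (fun j => (1:ℝ) * a j)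
            (fun j => ((c n + 1 : ℤ) : ℝ) * a j)]
          refine Finset.sum_congr rfl fun j hj => ?_
          simp only [hc']
          split_ifs <;> push_cast <;> ring
        have hSa : ∑ j ∈ insert m s, (c' j : ℝ) * a j
            = (∑ j ∈ s, (c j : ℝ) * a j) + (a m + a n) := by
          rw [hsa, ← Finset.add_sum_erase s (fun j => (c j : ℝ) * a j) hns]
          push_cast; ring
        have hsx : ∑ j ∈ insert m s, (c' j : ℝ) • x j
            = ((1:ℝ)) • x m + ((((c n + 1 : ℤ) : ℝ)) • x n + ∑ j ∈ s.erase n, (c j : ℝ) • x j) := by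
          rw [← aux_sum_split hms hns (fun j => (c j : ℝ) • x j) (fun j => ((1:ℝ)) • x j)
            (fun j => (((c n + 1 : ℤ) : ℝ)) • x j)]
          refine Finset.sum_congr rfl fun j hj => ?_
          simp only [hc']
          split_ifs <;> push_cast <;> module
        have hTx : ∑ j ∈ insert m s, (c' j : ℝ) • x j
            = (∑ j ∈ s, (c j : ℝ) • x j) + (x m + x n) := by
          rw [hsx, ← Finset.add_sum_erase s (fun j => (c j : ℝ) • x j) hns]
          push_cast
          module
        have hμ2 : ∑ j ∈ insert m s, (if 0 ≤ c' j then c' j - 1 else 1 - c' j).toNat ≤ k := by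
          have e : ∑ j ∈ insert m s, (if 0 ≤ c' j then c' j - 1 else 1 - c' j).toNat
              = (if 0 ≤ (1:ℤ) then (1:ℤ) - 1 else 1 - 1).toNat
                + ((if 0 ≤ c n + 1 then c n + 1 - 1 else 1 - (c n + 1)).toNat
                  + ∑ j ∈ s.erase n, (if 0 ≤ c j then c j - 1 else 1 - c j).toNat) := by
            rw [← aux_sum_split hms hns (fun j => (if 0 ≤ c j then c j - 1 else 1 - c j).toNat)
              (fun _ => (if 0 ≤ (1:ℤ) then (1:ℤ) - 1 else 1 - 1).toNat)
              (fun _ => (if 0 ≤ c n + 1 then c n + 1 - 1 else 1 - (c n + 1)).toNat)]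
            refine Finset.sum_congr rfl fun j hj => ?_
            simp only [hc']
            by_cases h1 : j = m
            · simp [h1]
            · by_cases h2 : j = n <;> simp [h1, h2, Ne.symm hmn]
          rw [e]
          rw [← Finset.add_sum_erase s (fun j => (if 0 ≤ c j then c j - 1 else 1 - c j).toNat) hns] at hμ
          have h2 : (if 0 ≤ c n + 1 then c n + 1 - 1 else 1 - (c n + 1)).toNat + 1
              ≤ (if 0 ≤ c n then c n - 1 else 1 - c n).toNat := by
            split_ifs <;> omega
          have h3 : (if 0 ≤ (1:ℤ) then (1:ℤ) - 1 else 1 - 1).toNat = 0 := by norm_num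
          omega
        have hIH := IH (insert m s) c' hμ2 δ hδ
        have hdm : |a m + a n| ≤ ‖x m + x n‖ := aux_pair x a hle hmn
        have h4 : |∑ j ∈ s, (c j : ℝ) * a j|
            ≤ |∑ j ∈ insert m s, (c' j : ℝ) * a j| + |a m + a n| := by
          have e : ∑ j ∈ s, (c j : ℝ) * a j
              = (∑ j ∈ insert m s, (c' j : ℝ) * a j) - (a m + a n) := by rw [hSa]; ring
          rw [e]; exact abs_sub _ _
        have h5 : ‖∑ j ∈ insert m s, (c' j : ℝ) • x j‖
            ≤ ‖∑ j ∈ s, (c j : ℝ) • x j‖ + ‖x m + x n‖ := by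
          rw [hTx]; exact norm_add_le _ _
        push_cast
        linarith

end Aux4
section Aux5
variable {X : Type*} [NormedAddCommGroup X] [NormedSpace ℝ X]

lemma aux_int [Nontrivial X] (x : ℕ → X) (a : ℕ → ℝ)
    (hle : ∀ M : Finset ℕ, |∑ n ∈ M, a n| ≤ ‖∑ n ∈ M, x n‖)
    (hx : ∀ n, ‖x n‖ ≤ 1)
    (hdense : Metric.closedBall (0 : X) 1 ⊆ closure (Set.range x))
    (s : Finset ℕ) (c : ℕ → ℤ) :
    |∑ n ∈ s, (c n : ℝ) * a n| ≤ ‖∑ n ∈ s, (c n : ℝ) • x n‖ := by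
  refine le_of_forall_pos_le_add fun ε hε => ?_
  set k : ℕ := ∑ n ∈ s, (if 0 ≤ c n then c n - 1 else 1 - c n).toNat with hk
  have hδ : 0 < ε / (2 * k + 2) := by positivity
  have h := aux_main x a hle hx hdense k s c le_rfl _ hδ
  have h2 : 2 * (k:ℝ) * (ε / (2 * k + 2)) ≤ ε := by
    have hpos : (0:ℝ) < 2 * (k:ℝ) + 2 := by positivity
    have h7 : (2*(k:ℝ))/(2*(k:ℝ)+2) ≤ 1 := by
      rw [div_le_one hpos]; linarith
    calc 2*(k:ℝ)*(ε/(2*(k:ℝ)+2)) = ((2*(k:ℝ))/(2*(k:ℝ)+2))*ε := by ring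
      _ ≤ 1*ε := mul_le_mul_of_nonneg_right h7 hε.le
      _ = ε := one_mul ε
  linarith

lemma aux_real [Nontrivial X] (x : ℕ → X) (a : ℕ → ℝ)
    (hle : ∀ M : Finset ℕ, |∑ n ∈ M, a n| ≤ ‖∑ n ∈ M, x n‖)
    (hx : ∀ n, ‖x n‖ ≤ 1) (hA : ∀ n, |a n| ≤ 1)
    (hdense : Metric.closedBall (0 : X) 1 ⊆ closure (Set.range x))
    (s : Finset ℕ) (c : ℕ → ℝ) :
    |∑ n ∈ s, c n * a n| ≤ ‖∑ n ∈ s, c n • x n‖ := by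
  refine le_of_forall_pos_le_add fun ε hε => ?_
  obtain ⟨d, hd⟩ := exists_nat_gt ((s.card : ℝ) / ε)
  have hd0 : 0 < (d:ℝ) := lt_of_le_of_lt (by positivity) hd
  set q : ℕ → ℤ := fun n => round ((d:ℝ) * c n) with hq
  have hqd : ∀ n, |c n - (q n : ℝ)/d| ≤ 1/(2*d) := by
    intro n
    have e : c n - (q n : ℝ)/d = ((d:ℝ) * c n - q n)/d := by field_simp
    rw [e, abs_div, abs_of_pos hd0]
    calc |(d:ℝ) * c n - q n| / d ≤ (1/2) / d := by
          gcongr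
          exact abs_sub_round _
      _ = 1/(2*d) := by ring
  have hint := aux_int x a hle hx hdense s q
  have h3 : |∑ n ∈ s, ((q n : ℝ)/d) * a n| ≤ ‖∑ n ∈ s, ((q n : ℝ)/d) • x n‖ := by
    have e1 : ∑ n ∈ s, ((q n : ℝ)/d) * a n = (1/d) * ∑ n ∈ s, (q n : ℝ) * a n := by
      rw [Finset.mul_sum]
      exact Finset.sum_congr rfl fun n _ => by ring
    have e2 : ∑ n ∈ s, ((q n : ℝ)/d) • x n = ((1:ℝ)/d) • ∑ n ∈ s, (q n : ℝ) • x n := by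
      rw [Finset.smul_sum]
      refine Finset.sum_congr rfl fun n _ => ?_
      rw [smul_smul]
      congr 1
      ring
    rw [e1, e2, abs_mul, norm_smul, Real.norm_eq_abs]
    exact mul_le_mul_of_nonneg_left hint (abs_nonneg _)
  have h1 : |∑ n ∈ s, c n * a n - ∑ n ∈ s, ((q n : ℝ)/d) * a n| ≤ s.card * (1/(2*d)) := by
    rw [← Finset.sum_sub_distrib]
    calc |∑ n ∈ s, (c n * a n - ((q n : ℝ)/d) * a n)|
        ≤ ∑ n ∈ s, |c n * a n - ((q n : ℝ)/d) * a n| := Finset.abs_sum_le_sum_abs _ _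
      _ ≤ ∑ n ∈ s, (1/(2*(d:ℝ))) := by
          refine Finset.sum_le_sum fun n _ => ?_
          have e : c n * a n - ((q n : ℝ)/d) * a n = (c n - (q n : ℝ)/d) * a n := by ring
          rw [e, abs_mul]
          calc |c n - (q n : ℝ)/d| * |a n| ≤ (1/(2*d)) * 1 :=
                mul_le_mul (hqd n) (hA n) (abs_nonneg _) (by positivity)
            _ = 1/(2*d) := by ring
      _ = s.card * (1/(2*d)) := by rw [Finset.sum_const, nsmul_eq_mul]
  have h2 : ‖∑ n ∈ s, ((q n : ℝ)/d) • x n - ∑ n ∈ s, c n • x n‖ ≤ s.card * (1/(2*d)) := by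
    rw [← Finset.sum_sub_distrib]
    calc ‖∑ n ∈ s, (((q n : ℝ)/d) • x n - c n • x n)‖
        ≤ ∑ n ∈ s, ‖((q n : ℝ)/d) • x n - c n • x n‖ := norm_sum_le _ _
      _ ≤ ∑ n ∈ s, (1/(2*(d:ℝ))) := by
          refine Finset.sum_le_sum fun n _ => ?_
          rw [← sub_smul, norm_smul, Real.norm_eq_abs, abs_sub_comm]
          calc |c n - (q n : ℝ)/d| * ‖x n‖ ≤ (1/(2*d)) * 1 :=
                mul_le_mul (hqd n) (hx n) (norm_nonneg _) (by positivity)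
            _ = 1/(2*d) := by ring
      _ = s.card * (1/(2*d)) := by rw [Finset.sum_const, nsmul_eq_mul]
  have h4 : ‖∑ n ∈ s, ((q n : ℝ)/d) • x n‖ ≤ ‖∑ n ∈ s, c n • x n‖ + s.card * (1/(2*d)) := by
    have hn := norm_add_le (∑ n ∈ s, c n • x n)
      (∑ n ∈ s, ((q n : ℝ)/d) • x n - ∑ n ∈ s, c n • x n)
    have e : ∑ n ∈ s, c n • x n + (∑ n ∈ s, ((q n : ℝ)/d) • x n - ∑ n ∈ s, c n • x n)
        = ∑ n ∈ s, ((q n : ℝ)/d) • x n := by abel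
    rw [e] at hn
    linarith
  have h5 : |∑ n ∈ s, c n * a n| ≤ |∑ n ∈ s, ((q n : ℝ)/d) * a n| + s.card * (1/(2*d)) := by
    have habs := abs_add_le (∑ n ∈ s, ((q n : ℝ)/d) * a n)
      (∑ n ∈ s, c n * a n - ∑ n ∈ s, ((q n : ℝ)/d) * a n)
    have e : ∑ n ∈ s, ((q n : ℝ)/d) * a n + (∑ n ∈ s, c n * a n - ∑ n ∈ s, ((q n : ℝ)/d) * a n)
        = ∑ n ∈ s, c n * a n := by ring
    rw [e] at habs
    linarith
  have hcard : (s.card : ℝ) * (1/(2*d)) + (s.card : ℝ) * (1/(2*d)) ≤ ε := by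
    have h6 : (s.card : ℝ) < d * ε := by
      rw [div_lt_iff₀ hε] at hd
      linarith
    have e : (s.card : ℝ) * (1/(2*d)) + (s.card : ℝ) * (1/(2*d)) = (s.card : ℝ) / d := by
      field_simp
      ring
    rw [e, div_le_iff₀ hd0]
    nlinarith
  linarith
end Aux5

theorem stmt6 (X : Type*) [NormedAddCommGroup X] [NormedSpace ℝ X] [CompleteSpace X]
    [TopologicalSpace.SeparableSpace X]
    (x : ℕ → X) (hx : ∀ n, x n ∈ Metric.closedBall (0 : X) 1)
    (hdense : Metric.closedBall (0 : X) 1 ⊆ closure (Set.range x))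
    (a : ℕ → ℝ) (ha : ∀ n, a n ∈ Set.Icc (-1 : ℝ) 1)
    (hle : ∀ M : Finset ℕ, |∑ n ∈ M, a n| ≤ ‖∑ n ∈ M, x n‖) :
    ∃ f : X →L[ℝ] ℝ, ‖f‖ ≤ 1 ∧ ∀ n, f (x n) = a n := by
  classical
  rcases subsingleton_or_nontrivial X with hsub | hnt
  · refine ⟨0, by simp, fun n => ?_⟩
    have h1 : |a n| ≤ ‖x n‖ := by simpa using hle {n}
    have h2 : x n = 0 := Subsingleton.elim _ _
    rw [h2, norm_zero] at h1
    have h3 : a n = 0 := abs_eq_zero.mp (le_antisymm h1 (abs_nonneg _))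
    simp [h3]
  · have hx' : ∀ n, ‖x n‖ ≤ 1 := fun n => by
      simpa [Metric.mem_closedBall, dist_zero_right] using hx n
    have hA : ∀ n, |a n| ≤ 1 := fun n => abs_le.mpr ⟨(ha n).1, (ha n).2⟩
    set T : (ℕ →₀ ℝ) →ₗ[ℝ] X := Finsupp.linearCombination ℝ x with hT
    set S : (ℕ →₀ ℝ) →ₗ[ℝ] ℝ := Finsupp.linearCombination ℝ a with hS
    have key : ∀ c : ℕ →₀ ℝ, |S c| ≤ ‖T c‖ := by
      intro c
      have eS : S c = ∑ n ∈ c.support, c n * a n := by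
        rw [hS, Finsupp.linearCombination_apply, Finsupp.sum]
        exact Finset.sum_congr rfl fun n _ => rfl
      have eT : T c = ∑ n ∈ c.support, c n • x n := by
        rw [hT, Finsupp.linearCombination_apply, Finsupp.sum]
      rw [eS, eT]
      exact aux_real x a hle hx' hA hdense c.support c
    have hker : LinearMap.ker T ≤ LinearMap.ker S := by
      intro c hc
      rw [LinearMap.mem_ker] at hc ⊢
      have h := key c
      rw [hc, norm_zero] at h
      exact abs_eq_zero.mp (le_antisymm h (abs_nonneg _))
    set e := LinearMap.quotKerEquivRange T with he
    set S0 : ((ℕ →₀ ℝ) ⧸ LinearMap.ker T) →ₗ[ℝ] ℝ := (LinearMap.ker T).liftQ S hker with hS0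
    set φ0 : (LinearMap.range T) →ₗ[ℝ] ℝ := S0 ∘ₗ (e.symm : _ →ₗ[ℝ] _) with hφ0
    have hφval : ∀ c : ℕ →₀ ℝ, φ0 ⟨T c, LinearMap.mem_range_self T c⟩ = S c := by
      intro c
      have h1 : e (Submodule.Quotient.mk c) = ⟨T c, LinearMap.mem_range_self T c⟩ := by
        apply Subtype.ext
        exact LinearMap.quotKerEquivRange_apply_mk T c
      have h2 : e.symm ⟨T c, LinearMap.mem_range_self T c⟩ = Submodule.Quotient.mk c := by
        rw [← h1, LinearEquiv.symm_apply_apply]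
      rw [hφ0]
      simp only [LinearMap.comp_apply, LinearEquiv.coe_coe, h2, hS0]
      exact Submodule.liftQ_apply _ _ _
    have hφle : ∀ y : LinearMap.range T, |φ0 y| ≤ ‖(y : X)‖ := by
      intro y
      obtain ⟨c, hc⟩ := y.2
      have hy : y = ⟨T c, LinearMap.mem_range_self T c⟩ := Subtype.ext hc.symm
      rw [hy, hφval]
      calc |S c| ≤ ‖T c‖ := key c
        _ = ‖((⟨T c, LinearMap.mem_range_self T c⟩ : LinearMap.range T) : X)‖ := rfl
    set φ : (LinearMap.range T) →L[ℝ] ℝ :=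
      LinearMap.mkContinuous φ0 1 (fun y => by
        rw [Real.norm_eq_abs, one_mul]
        exact hφle y) with hφ
    obtain ⟨g, hg, hgnorm⟩ := exists_extension_norm_eq (LinearMap.range T) φ
    refine ⟨g, ?_, ?_⟩
    · rw [hgnorm]
      exact LinearMap.mkContinuous_norm_le φ0 zero_le_one _
    · intro n
      have hxn : x n ∈ LinearMap.range T :=
        ⟨Finsupp.single n 1, by simp [hT, Finsupp.linearCombination_single]⟩
      have hgx := hg ⟨x n, hxn⟩
      have h1 : (⟨x n, hxn⟩ : LinearMap.range T)
          = ⟨T (Finsupp.single n 1), LinearMap.mem_range_self T _⟩ := by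
        apply Subtype.ext
        simp [hT, Finsupp.linearCombination_single]
      have h2 : φ (⟨x n, hxn⟩ : LinearMap.range T) = a n := by
        rw [hφ]
        have : φ0 (⟨x n, hxn⟩ : LinearMap.range T) = a n := by
          rw [h1, hφval]
          simp [hS, Finsupp.linearCombination_single]
        simpa using this
      rw [← h2]
      exact hgx
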